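/- For any finitely supported multiindex ν ∈ ℕ_0^s, ∑_{m ≤ ν} (∏_j C(ν_j, m_j)) · |m|! · |ν − m|! = (|ν| + 1)!, where |m| = ∑_j m_j and the sum is over all multiindices m with m_j ≤ ν_j for each j. -/

import Mathlib

open Finset

open Polynomial in
lemma vandermonde_fiber {s : ℕ} (ν : Fin s → ℕ) (k : ℕ) :
    ∑ m ∈ (Finset.Iic ν).filter (fun m => ∑ j, m j = k), ∏ j, (ν j).choose (m j)
      = (∑ j, ν j).choose k := by
  have hIic : Finset.Iic ν = Fintype.piFinset fun i => Finset.Iic (ν i) := by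
    ext m; simp [Fintype.mem_piFinset, Pi.le_def]
  have hpoly : ((X + 1 : Polynomial ℕ) ^ (∑ j, ν j)) =
      ∑ m ∈ Finset.Iic ν, C (∏ j, (ν j).choose (m j)) * X ^ (∑ j, m j) := by
    rw [← Finset.prod_pow_eq_pow_sum]
    have h1 : ∀ j : Fin s, ((X + 1 : Polynomial ℕ) ^ (ν j)) =
        ∑ t ∈ Finset.Iic (ν j), C ((ν j).choose t) * X ^ t := by
      intro j
      apply Polynomial.ext
      intro n
      simp only [coeff_X_add_one_pow, Nat.cast_id, finset_sum_coeff, coeff_C_mul, coeff_X_pow,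
        mul_ite, mul_one, mul_zero]
      rw [Finset.sum_ite_eq]
      by_cases h : n ≤ ν j
      · simp [h]
      · simp [h, Nat.choose_eq_zero_of_lt (Nat.lt_of_not_le h)]
    simp_rw [h1]
    rw [hIic, Finset.prod_univ_sum]
    refine Finset.sum_congr rfl fun m _ => ?_
    rw [Finset.prod_mul_distrib, ← map_prod, Finset.prod_pow_eq_pow_sum]
  have calc1 : ((∑ j, ν j).choose k : ℕ)
      = ∑ m ∈ Finset.Iic ν, (if (∑ j, m j) = k then ∏ j, (ν j).choose (m j) else 0) := by
    have := congrArg (fun p : Polynomial ℕ => p.coeff k) hpoly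
    simp only [coeff_X_add_one_pow, Nat.cast_id, finset_sum_coeff, coeff_C_mul, coeff_X_pow,
      mul_ite, mul_one, mul_zero] at this
    rw [this]
    refine Finset.sum_congr rfl fun m _ => ?_
    by_cases h : (∑ j, m j) = k
    · rw [if_pos h.symm, if_pos h]
    · rw [if_neg (fun hk => h hk.symm), if_neg h]
  rw [calc1, ← Finset.sum_filter]

/-- `∑_{m ≤ ν} C(ν,m)·|m|!·|ν−m|! = (|ν|+1)!` for any multiindex `ν ∈ ℕ₀^s`. -/
theorem sum_choose_factorial_mul_factorial {s : ℕ} (ν : Fin s → ℕ) :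
    ∑ m ∈ Finset.Iic ν,
        (∏ j, (ν j).choose (m j)) * (∑ j, m j).factorial * (∑ j, (ν j - m j)).factorial
      = ((∑ j, ν j) + 1).factorial := by
  set n := ∑ j, ν j with hn
  have key : ∀ m ∈ Finset.Iic ν,
      (∏ j, (ν j).choose (m j)) * (∑ j, m j).factorial * (∑ j, (ν j - m j)).factorial
        = (∏ j, (ν j).choose (m j)) * (∑ j, m j).factorial * (n - ∑ j, m j).factorial := by
    intro m hm
    rw [Finset.mem_Iic] at hm
    congr 2
    rw [hn, ← Finset.sum_tsub_distrib]
    exact fun j _ => hm j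
  rw [Finset.sum_congr rfl key]
  rw [← Finset.sum_fiberwise_of_maps_to (g := fun m => ∑ j, m j) (t := Finset.range (n + 1))
    (fun m hm => by
      rw [Finset.mem_range, Nat.lt_succ_iff, hn]
      rw [Finset.mem_Iic] at hm
      exact Finset.sum_le_sum fun j _ => hm j)]
  have hfib : ∀ k ∈ Finset.range (n + 1),
      ∑ m ∈ (Finset.Iic ν).filter (fun m => ∑ j, m j = k),
        (∏ j, (ν j).choose (m j)) * (∑ j, m j).factorial * (n - ∑ j, m j).factorial
      = n.factorial := by
    intro k hk
    rw [Finset.mem_range, Nat.lt_succ_iff] at hk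
    calc ∑ m ∈ (Finset.Iic ν).filter (fun m => ∑ j, m j = k),
          (∏ j, (ν j).choose (m j)) * (∑ j, m j).factorial * (n - ∑ j, m j).factorial
        = ∑ m ∈ (Finset.Iic ν).filter (fun m => ∑ j, m j = k),
          (∏ j, (ν j).choose (m j)) * (k.factorial * (n - k).factorial) := by
          refine Finset.sum_congr rfl fun m hm => ?_
          rw [(Finset.mem_filter.1 hm).2, mul_assoc]
      _ = (∑ m ∈ (Finset.Iic ν).filter (fun m => ∑ j, m j = k),
            ∏ j, (ν j).choose (m j)) * (k.factorial * (n - k).factorial) := by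
          rw [Finset.sum_mul]
      _ = n.choose k * k.factorial * (n - k).factorial := by
          rw [vandermonde_fiber ν k, ← hn, mul_assoc]
      _ = n.factorial := Nat.choose_mul_factorial_mul_factorial hk
  rw [Finset.sum_congr rfl hfib, Finset.sum_const, Finset.card_range, smul_eq_mul,
    Nat.factorial_succ]
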